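/- Fix an integer p ≥ 3 and let λ = 2cos(π/p). Let α ∈ ℝ with partial quotients r_j produced by the λ-continued-fraction algorithm. For 0 ≤ m ≤ n define C_{m,n} by downward recursion: C_{n,n} = r_nλ and C_{m,n} = r_mλ − 1/C_{m+1,n}. Then the convergents C_n = C_{0,n} satisfy C_n > α for all n ≥ 0 and C_{n+1} < C_n for all n ≥ 0; consequently the sequence (C_n) converges. -/

import Mathlib

open Real Matrix Filter

noncomputable section

/-- `λ_p = 2 cos (π / p)`, the minimal translation length of the Hecke group `G_p`. -/
def heckeLambda (p : ℕ) : ℝ := 2 * Real.cos (Real.pi / p)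

/-- The matrix `S = [[1, λ], [0, 1]]`. -/
def Smat (l : ℝ) : Matrix (Fin 2) (Fin 2) ℝ := !![1, l; 0, 1]

/-- The matrix `T = [[0, -1], [1, 0]]`. -/
def Tmat : Matrix (Fin 2) (Fin 2) ℝ := !![0, -1; 1, 0]

/-- The matrix `U = S * T = [[λ, -1], [1, 0]]`. -/
def Umat (l : ℝ) : Matrix (Fin 2) (Fin 2) ℝ := !![l, -1; 1, 0]

/-- The matrix `S^r = [[1, rλ], [0, 1]]` for an integer exponent `r`. -/
def SmatZ (l : ℝ) (r : ℤ) : Matrix (Fin 2) (Fin 2) ℝ := !![1, (r : ℝ) * l; 0, 1]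

/-- Möbius (linear fractional) action of a `2 × 2` real matrix on a real number. -/
def mobius (M : Matrix (Fin 2) (Fin 2) ℝ) (x : ℝ) : ℝ :=
  (M 0 0 * x + M 0 1) / (M 1 0 * x + M 1 1)

/-- `U^k(0)`, the image of `0` under `k` iterations of the linear fractional
transformation `U : x ↦ λ - 1/x`; as a ratio of entries of the matrix power `U^k`. -/
def Uorbit (l : ℝ) (k : ℕ) : ℝ := ((Umat l) ^ k) 0 1 / ((Umat l) ^ k) 1 1

/-- The complete quotients `α_j` of the (negative) `λ`-continued fraction algorithm:
`α_0 = α`, `α_{j+1} = 1 / (r_j λ - α_j)` with `r_j = ⌊α_j / λ⌋ + 1`. -/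
def cq (l α : ℝ) : ℕ → ℝ
  | 0 => α
  | j + 1 => 1 / (((⌊cq l α j / l⌋ : ℝ) + 1) * l - cq l α j)

/-- The partial quotients `r_j = ⌊α_j / λ⌋ + 1` of the `λ`-continued fraction of `α`. -/
def pq (l α : ℝ) (j : ℕ) : ℤ := ⌊cq l α j / l⌋ + 1

/-- `S` as an element of `SL(2, ℝ)`. -/
def Sgen (l : ℝ) : Matrix.SpecialLinearGroup (Fin 2) ℝ :=
  ⟨!![1, l; 0, 1], by norm_num [Matrix.det_fin_two_of]⟩

/-- `T` as an element of `SL(2, ℝ)`. -/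
def Tgen : Matrix.SpecialLinearGroup (Fin 2) ℝ :=
  ⟨!![0, -1; 1, 0], by norm_num [Matrix.det_fin_two_of]⟩

/-- The Hecke group `G_p`, the subgroup of `SL(2, ℝ)` generated by `S` and `T`. -/
def heckeGroup (l : ℝ) : Subgroup (Matrix.SpecialLinearGroup (Fin 2) ℝ) :=
  Subgroup.closure {Sgen l, Tgen}

/-- `M = [[a, b], [c, d]]` fixes `α` as a linear fractional transformation, i.e.
`α` is a root of `c x² + (d - a) x - b = 0`. -/
def fixesQuad (M : Matrix.SpecialLinearGroup (Fin 2) ℝ) (α : ℝ) : Prop :=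
  M.1 1 0 * α ^ 2 + (M.1 1 1 - M.1 0 0) * α - M.1 0 1 = 0

/-- `α` is a hyperbolic fixed point of the Hecke group `G(λ)`. -/
def IsHypFixedPt (l α : ℝ) : Prop :=
  ∃ M ∈ heckeGroup l, 2 < |M.1 0 0 + M.1 1 1| ∧ fixesQuad M α

/-- `α` is a hyperbolic fixed point of `G(λ)` with Hecke conjugate `α'`
(the other root of the fixed-point quadratic). -/
def IsHypPair (l α α' : ℝ) : Prop :=
  ∃ M ∈ heckeGroup l, 2 < |M.1 0 0 + M.1 1 1| ∧ fixesQuad M α ∧ fixesQuad M α' ∧ α' ≠ α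

/-- A hyperbolic fixed point is `G_p`-reduced when its complete-quotient sequence is
purely periodic. -/
def GpReduced (l β : ℝ) : Prop :=
  IsHypFixedPt l β ∧ ∃ m, 1 ≤ m ∧ cq l β m = β

/-- The map `Φ_p : [0, ∞) → [0, ∞)`: `Φ_p(x) = T U^i (x)` when
`U^{p-i+1}(0) ≤ x < U^{p-i}(0)` for the (unique) `i` with `1 ≤ i ≤ p - 2`,
and `Φ_p(x) = x - λ` when `x ≥ λ`. -/
def Phi (p : ℕ) (l : ℝ) (x : ℝ) : ℝ :=
  @dite ℝ (∃ i : ℕ, 1 ≤ i ∧ i ≤ p - 2 ∧ Uorbit l (p - i + 1) ≤ x ∧ x < Uorbit l (p - i))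
    (Classical.propDecidable _)
    (fun h => mobius (Tmat * (Umat l) ^ h.choose) x)
    (fun _ => x - l)

/-- `C_{n-j, n}`: the partial convergents computed by downward recursion,
`C_{n,n} = r_n λ` and `C_{m,n} = r_m λ - 1 / C_{m+1,n}`. -/
def convAux (l α : ℝ) (n : ℕ) : ℕ → ℝ
  | 0 => (pq l α n : ℝ) * l
  | j + 1 => (pq l α (n - (j + 1)) : ℝ) * l - 1 / convAux l α n j

/-- The `n`-th convergent `C_n = C_{0,n}` of the `λ`-continued fraction of `α`. -/
def conv (l α : ℝ) (n : ℕ) : ℝ := convAux l α n n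

/-- The word `S^{r_0} T S^{r_1} T ⋯ S^{r_n} T`. -/
def cfWord (l : ℝ) (r : ℕ → ℤ) (n : ℕ) : Matrix (Fin 2) (Fin 2) ℝ :=
  ((List.range (n + 1)).map fun j => SmatZ l (r j) * Tmat).prod


lemma heckeLambda_pos {p : ℕ} (hp : 3 ≤ p) : 0 < heckeLambda p := by
  have hp0 : (0:ℝ) < p := by exact_mod_cast Nat.lt_of_lt_of_le (by norm_num) hp
  have h1 : Real.pi / p < Real.pi / 2 := by
    apply div_lt_div_of_pos_left Real.pi_pos (by norm_num)
    exact_mod_cast lt_of_lt_of_le (by norm_num) hp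
  have h2 : 0 < Real.pi / p := div_pos Real.pi_pos hp0
  have : 0 < Real.cos (Real.pi / p) :=
    Real.cos_pos_of_mem_Ioo ⟨by linarith [Real.pi_pos], h1⟩
  unfold heckeLambda; linarith

lemma gap_pos {l : ℝ} (hl : 0 < l) (α : ℝ) (j : ℕ) :
    0 < (pq l α j : ℝ) * l - cq l α j := by
  have h := Int.lt_floor_add_one (cq l α j / l)
  have : cq l α j < ((⌊cq l α j / l⌋ : ℝ) + 1) * l := by
    rw [← div_lt_iff₀ hl] at *; exact h
  unfold pq; push_cast; linarith

lemma cq_rel (l α : ℝ) (j : ℕ) :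
    cq l α (j + 1) = 1 / ((pq l α j : ℝ) * l - cq l α j) := by
  show (1 / (((⌊cq l α j / l⌋ : ℝ) + 1) * l - cq l α j)) = _
  unfold pq; push_cast; ring_nf

lemma cq_succ_pos {l : ℝ} (hl : 0 < l) (α : ℝ) (j : ℕ) : 0 < cq l α (j + 1) := by
  rw [cq_rel]; exact one_div_pos.mpr (gap_pos hl α j)

lemma convAux_gt {l : ℝ} (hl : 0 < l) (α : ℝ) :
    ∀ j n : ℕ, j ≤ n → cq l α (n - j) < convAux l α n j := by
  intro j
  induction j with
  | zero =>
    intro n _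
    have := gap_pos hl α n
    simpa [convAux] using by linarith
  | succ j ih =>
    intro n hjn
    have hj : j ≤ n := Nat.le_of_succ_le hjn
    have hIH := ih n hj
    have hidx : n - j = (n - (j + 1)) + 1 := by omega
    rw [hidx] at hIH
    have hcq : 0 < cq l α ((n - (j + 1)) + 1) := cq_succ_pos hl α _
    have hC : 0 < convAux l α n j := lt_trans hcq hIH
    have hgap := gap_pos hl α (n - (j + 1))
    have hrel := cq_rel l α (n - (j + 1))
    have hinv : 1 / convAux l α n j < (pq l α (n - (j + 1)) : ℝ) * l - cq l α (n - (j + 1)) := by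
      have : 1 / convAux l α n j < 1 / cq l α ((n - (j + 1)) + 1) :=
        one_div_lt_one_div_of_lt hcq hIH
      rwa [hrel, one_div_one_div] at this
    show _ < (pq l α (n - (j + 1)) : ℝ) * l - 1 / convAux l α n j
    linarith

lemma convAux_lt {l : ℝ} (hl : 0 < l) (α : ℝ) :
    ∀ j n : ℕ, j ≤ n → convAux l α (n + 1) (j + 1) < convAux l α n j := by
  intro j
  induction j with
  | zero =>
    intro n _
    have h0 : 0 < convAux l α (n + 1) 0 := by
      have h := convAux_gt hl α 0 (n + 1) (Nat.zero_le _)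
      simp only [Nat.sub_zero] at h
      exact lt_trans (cq_succ_pos hl α n) h
    have : 0 < 1 / convAux l α (n + 1) 0 := one_div_pos.mpr h0
    show (pq l α (n + 1 - 1) : ℝ) * l - 1 / convAux l α (n + 1) 0 < (pq l α n : ℝ) * l
    simp only [Nat.add_sub_cancel]
    linarith
  | succ j ih =>
    intro n hjn
    have hj : j ≤ n := Nat.le_of_succ_le hjn
    have hIH := ih n hj
    have hA : 0 < convAux l α (n + 1) (j + 1) := by
      have h1 := convAux_gt hl α (j + 1) (n + 1) (by omega)
      have hidx : (n + 1) - (j + 1) = (n - (j + 1)) + 1 := by omega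
      rw [hidx] at h1
      exact lt_trans (cq_succ_pos hl α _) h1
    have hinv : 1 / convAux l α n j < 1 / convAux l α (n + 1) (j + 1) :=
      one_div_lt_one_div_of_lt hA hIH
    have hidx2 : (n + 1) - (j + 2) = n - (j + 1) := by omega
    show (pq l α ((n + 1) - (j + 2)) : ℝ) * l - 1 / convAux l α (n + 1) (j + 1) <
        (pq l α (n - (j + 1)) : ℝ) * l - 1 / convAux l α n j
    rw [hidx2]
    linarith

/-- the convergents `C_n` of the `λ`-continued fraction of `α`
satisfy `C_n > α`, are strictly decreasing, and hence converge. -/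
theorem hecke_convergents (p : ℕ) (hp : 3 ≤ p) (α : ℝ) :
    (∀ n : ℕ, α < conv (heckeLambda p) α n) ∧
    (∀ n : ℕ, conv (heckeLambda p) α (n + 1) < conv (heckeLambda p) α n) ∧
    ∃ L : ℝ, Filter.Tendsto (conv (heckeLambda p) α) Filter.atTop (nhds L) := by
  have hl : 0 < heckeLambda p := heckeLambda_pos hp
  have h1 : ∀ n : ℕ, α < conv (heckeLambda p) α n := by
    intro n
    have := convAux_gt hl α n n le_rfl
    simpa [conv, cq] using this
  have h2 : ∀ n : ℕ, conv (heckeLambda p) α (n + 1) < conv (heckeLambda p) α n := by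
    intro n
    exact convAux_lt hl α n n le_rfl
  refine ⟨h1, h2, ⟨⨅ n, conv (heckeLambda p) α n, ?_⟩⟩
  apply tendsto_atTop_ciInf
  · exact (strictAnti_nat_of_succ_lt h2).antitone
  · exact ⟨α, by rintro _ ⟨n, rfl⟩; exact (h1 n).le⟩
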